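/- Let f : ℕ → ℝ be strictly increasing with f(t) > 0 for all t, and α, W, λ, δ > 0. Define m(t) as the least minimizer over ℕ of Δ_t(x) = W·exp(−x·λ·δ) + α·f(t)·x. If f(t) → ∞ as t → ∞, then there exists T₀ such that m(t) = 0 for all t ≥ T₀. -/
import Mathlib


/-- If the storage-cost function `f` tends to infinity, then eventually the
least minimizer of the per-slot cost `Δ t x = W·exp(−xλδ) + α·f(t)·x`
over `ℕ` is `0`: every content has finite optimal retention time. -/
theorem stmt_10 (W lam δ α : ℝ) (hW : 0 < W) (hlam : 0 < lam) (hδ : 0 < δ)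
    (hα : 0 < α) (f : ℕ → ℝ) (hf : StrictMono f) (hfpos : ∀ t, 0 < f t)
    (hftop : Filter.Tendsto f Filter.atTop Filter.atTop)
    (Δ : ℕ → ℕ → ℝ)
    (hΔ : ∀ t x, Δ t x = W * Real.exp (-(x : ℝ) * lam * δ) + α * f t * x)
    (m : ℕ → ℕ)
    (hmin : ∀ t, ∀ x : ℕ, Δ t (m t) ≤ Δ t x)
    (hleast : ∀ t, ∀ x : ℕ, Δ t x ≤ Δ t (m t) → m t ≤ x) :
    ∃ T₀ : ℕ, ∀ t, T₀ ≤ t → m t = 0 := by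
  obtain ⟨T₀, hT₀⟩ := (Filter.tendsto_atTop.mp hftop (W / α + 1)).exists_forall_of_atTop
  refine ⟨T₀, fun t ht => ?_⟩
  have hft : W < α * f t := by
    have := hT₀ t ht
    have hWα : W / α < f t := by linarith
    calc W = α * (W / α) := by field_simp
    _ < α * f t := by exact mul_lt_mul_of_pos_left hWα hα
  have h0 : ∀ x : ℕ, Δ t 0 ≤ Δ t x := by
    intro x
    rcases Nat.eq_zero_or_pos x with rfl | hx
    · exact le_refl _
    · rw [hΔ, hΔ]
      simp only [Nat.cast_zero, neg_zero, zero_mul, Real.exp_zero, mul_one, mul_zero, add_zero]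
      have h1 : (1 : ℝ) ≤ (x : ℝ) := by exact_mod_cast hx
      have hexp : 0 < W * Real.exp (-(x : ℝ) * lam * δ) :=
        mul_pos hW (Real.exp_pos _)
      have : α * f t ≤ α * f t * x := le_mul_of_one_le_right (le_of_lt (mul_pos hα (hfpos t))) h1
      linarith
  exact Nat.le_zero.mp (hleast t 0 (h0 (m t)))
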